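/- Let {P_i}_{i∈I} be a family of left S-semimodules and M a left S-semimodule. Then the direct sum ⊕_{i∈I} P_i is M-e-projective if and only if each P_i is M-e-projective. -/
import Mathlib


universe u

/-- `f` is `k`-normal. -/
def KNormal {S L M : Type*} [Semiring S] [AddCommMonoid L] [AddCommMonoid M]
    [Module S L] [Module S M] (f : L →ₗ[S] M) : Prop :=
  ∀ l₁ l₂ : L, f l₁ = f l₂ → ∃ k₁ k₂ : L, f k₁ = 0 ∧ f k₂ = 0 ∧ l₁ + k₁ = l₂ + k₂

/-- `P` is `M`-`e`-projective. -/
def MEProjective (S : Type u) [Semiring S] (P : Type u) [AddCommMonoid P]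
    [Module S P] (M : Type u) [AddCommMonoid M] [Module S M] : Prop :=
  ∀ (N : Type u) (_ : AddCommMonoid N) (_ : Module S N)
    (f : M →ₗ[S] N), Function.Surjective f → KNormal f →
    ∀ g : P →ₗ[S] N, ∃ h : P →ₗ[S] M, f.comp h = g ∧
      ∀ h' : P →ₗ[S] M, f.comp h' = g →
        ∃ h₁ h₂ : P →ₗ[S] M, f.comp h₁ = 0 ∧ f.comp h₂ = 0 ∧ h + h₁ = h' + h₂

/-- A direct sum `⊕ᵢ Pᵢ` is `M`-`e`-projective iff every `Pᵢ` is
`M`-`e`-projective. -/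
theorem directSum_meProjective_iff
    (S : Type u) [Semiring S] {ι : Type u} [DecidableEq ι]
    (P : ι → Type u) [∀ i, AddCommMonoid (P i)] [∀ i, Module S (P i)]
    (M : Type u) [AddCommMonoid M] [Module S M] :
    MEProjective S (DirectSum ι P) M ↔ ∀ i : ι, MEProjective S (P i) M := by
  constructor
  · intro hDS i N _ _ f hsurj hkn g
    obtain ⟨H, hH, hHe⟩ := hDS N ‹_› ‹_› f hsurj hkn
      (g.comp (DirectSum.component S ι P i))
    refine ⟨H.comp (DirectSum.lof S ι P i), ?_, ?_⟩
    · ext x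
      simpa using congrArg (fun φ => φ (DirectSum.lof S ι P i x)) hH
    · intro h' hh'
      obtain ⟨H₁, H₂, hf1, hf2, hsum⟩ :=
        hHe (h'.comp (DirectSum.component S ι P i)) (by
          rw [← LinearMap.comp_assoc, hh'])
      refine ⟨H₁.comp (DirectSum.lof S ι P i), H₂.comp (DirectSum.lof S ι P i),
        ?_, ?_, ?_⟩
      · ext x; simpa using congrArg (fun φ => φ (DirectSum.lof S ι P i x)) hf1
      · ext x; simpa using congrArg (fun φ => φ (DirectSum.lof S ι P i x)) hf2
      · ext x
        have := congrArg (fun φ => φ (DirectSum.lof S ι P i x)) hsum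
        simpa [DirectSum.component.lof_self] using this
  · intro hP N _ _ f hsurj hkn g
    choose h hcomp hext using fun i =>
      hP i N ‹_› ‹_› f hsurj hkn (g.comp (DirectSum.lof S ι P i))
    refine ⟨DirectSum.toModule S ι M h, ?_, ?_⟩
    · refine DirectSum.linearMap_ext S fun i => ?_
      ext x
      simpa using congrArg (fun φ => φ x) (hcomp i)
    · intro h' hh'
      have key : ∀ i, ∃ a b : P i →ₗ[S] M, f.comp a = 0 ∧ f.comp b = 0 ∧
          h i + a = (h'.comp (DirectSum.lof S ι P i)) + b := fun i =>
        hext i (h'.comp (DirectSum.lof S ι P i)) (by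
          rw [← LinearMap.comp_assoc, hh'])
      choose a b ha hb hab using key
      refine ⟨DirectSum.toModule S ι M a, DirectSum.toModule S ι M b, ?_, ?_, ?_⟩
      · refine DirectSum.linearMap_ext S fun i => ?_
        ext x
        simpa using congrArg (fun φ => φ x) (ha i)
      · refine DirectSum.linearMap_ext S fun i => ?_
        ext x
        simpa using congrArg (fun φ => φ x) (hb i)
      · refine DirectSum.linearMap_ext S fun i => ?_
        ext x
        simpa using congrArg (fun φ => φ x) (hab i)
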